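/- If G is a group and G' ≤ G is a finite index subgroup, then G is LERF if and only if G' is LERF. -/

import Mathlib

open scoped Pointwise


/-- A subgroup `H` of a group `G` is *separable* in `G` if for every `g ∈ G` with `g ∉ H`
there exists a finite index subgroup `G'` of `G` with `H ≤ G'` and `g ∉ G'`. -/
def Subgroup.IsSeparable {G : Type*} [Group G] (H : Subgroup G) : Prop :=
  ∀ g : G, g ∉ H → ∃ G' : Subgroup G, G'.FiniteIndex ∧ H ≤ G' ∧ g ∉ G'

/-- A group is *LERF* if all of its finitely generated subgroups are separable. -/
def Group.LERF (G : Type*) [Group G] : Prop :=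
  ∀ H : Subgroup G, H.FG → H.IsSeparable

private lemma fg_map_aux {G N : Type*} [Group G] [Group N] {H : Subgroup G} (h : H.FG)
    (f : G →* N) : (H.map f).FG := by
  classical
  obtain ⟨S, hS⟩ := h
  exact ⟨S.image f, by rw [Finset.coe_image, ← MonoidHom.map_closure, hS]⟩

private lemma fg_subgroupOf_aux {G : Type*} [Group G] {K G' : Subgroup G} (hK : K.FG)
    (hle : K ≤ G') : (K.subgroupOf G').FG := by
  classical
  obtain ⟨S, hS⟩ := hK
  refine ⟨S.attach.image (fun s => (⟨s.1, hle (hS ▸ Subgroup.subset_closure s.2)⟩ : G')), ?_⟩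
  apply Subgroup.map_injective G'.subtype_injective
  have himg : ⇑G'.subtype '' ↑(S.attach.image
      (fun s => (⟨s.1, hle (hS ▸ Subgroup.subset_closure s.2)⟩ : G'))) = (S : Set G) := by
    ext x
    constructor
    · rintro ⟨y, hy, rfl⟩
      simp only [Finset.coe_image, Set.mem_image, Finset.mem_coe, Finset.mem_attach] at hy
      obtain ⟨s, -, rfl⟩ := hy
      exact s.2
    · intro hx
      exact ⟨⟨x, hle (hS ▸ Subgroup.subset_closure hx)⟩,
        Finset.mem_coe.mpr (Finset.mem_image.mpr ⟨⟨x, hx⟩, Finset.mem_attach _ _, rfl⟩), rfl⟩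
  rw [MonoidHom.map_closure, himg, hS, Subgroup.subgroupOf_map_subtype, inf_eq_left.mpr hle]

private lemma finiteIndex_map_subtype {G : Type*} [Group G] {G' : Subgroup G}
    (h : G'.FiniteIndex) (M : Subgroup G') (hM : M.FiniteIndex) :
    (M.map G'.subtype).FiniteIndex := by
  have hle : M.map G'.subtype ≤ G' := by
    rintro x ⟨y, _, rfl⟩; exact y.2
  have hrel : (M.map G'.subtype).relIndex G' = M.index := by
    unfold Subgroup.relIndex
    rw [Subgroup.subgroupOf, Subgroup.comap_map_eq_self_of_injective G'.subtype_injective]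
  refine ⟨?_⟩
  rw [← Subgroup.relIndex_mul_index hle, hrel]
  exact Nat.mul_ne_zero hM.index_ne_zero h.index_ne_zero

/-- For a finite index subgroup `G' ≤ G`, the group `G` is LERF iff `G'` is LERF. -/
theorem lerf_iff_lerf_of_finiteIndex {G : Type*} [Group G] (G' : Subgroup G)
    (h : G'.FiniteIndex) : Group.LERF G ↔ Group.LERF G' := by
  haveI : G'.FiniteIndex := h
  constructor
  · -- G LERF → G' LERF
    intro hG H hH g hg
    have hHm : (H.map G'.subtype).FG := fg_map_aux hH G'.subtype
    have hgm : (g : G) ∉ H.map G'.subtype := by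
      rintro ⟨y, hy, hyg⟩
      exact hg (by rwa [show y = g from Subtype.ext hyg] at hy)
    obtain ⟨K, hKfi, hHK, hgK⟩ := hG _ hHm g hgm
    refine ⟨K.subgroupOf G', inferInstance, ?_, ?_⟩
    · intro x hx
      exact hHK ⟨x, hx, rfl⟩
    · exact hgK
  · -- G' LERF → G LERF
    intro hL H hH g hg
    set K : Subgroup G := G' ⊓ H with hKdef
    have hKG' : K ≤ G' := inf_le_left
    haveI : Group.FG H := (Group.fg_iff_subgroup_fg H).mpr hH
    haveI : (G'.subgroupOf H).FiniteIndex := inferInstance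
    haveI : Group.FG (G'.subgroupOf H) := Subgroup.fg_of_index_ne_zero _
    have hKfg : K.FG := by
      have : ((G'.subgroupOf H).map H.subtype).FG :=
        fg_map_aux ((Group.fg_iff_subgroup_fg _).mp inferInstance) H.subtype
      rwa [Subgroup.subgroupOf_map_subtype] at this
    have hK'fg : (K.subgroupOf G').FG := fg_subgroupOf_aux hKfg hKG'
    -- for each h ∈ H, find a finite index subgroup containing K missing h⁻¹ g
    have claim : ∀ x : H, ∃ M : Subgroup G, M.FiniteIndex ∧ K ≤ M ∧ (x : G)⁻¹ * g ∉ M := by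
      intro x
      by_cases hg' : (x : G)⁻¹ * g ∈ G'
      · have hnot : (⟨(x : G)⁻¹ * g, hg'⟩ : G') ∉ K.subgroupOf G' := by
          intro hmem
          have : (x : G)⁻¹ * g ∈ K := hmem
          have : (x : G)⁻¹ * g ∈ H := this.2
          exact hg (by simpa using H.mul_mem x.2 this)
        obtain ⟨M', hM'fi, hKM', hgM'⟩ := hL _ hK'fg _ hnot
        refine ⟨M'.map G'.subtype, finiteIndex_map_subtype h M' hM'fi, ?_, ?_⟩
        · intro y hy
          exact ⟨⟨y, hKG' hy⟩, hKM' hy, rfl⟩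
        · rintro ⟨z, hz, hzg⟩
          exact hgM' (by rwa [show z = ⟨(x : G)⁻¹ * g, hg'⟩ from Subtype.ext hzg] at hz)
      · exact ⟨G', h, hKG', hg'⟩
    choose M hMfi hKM hgM using claim
    haveI : Finite (H ⧸ G'.subgroupOf H) := Subgroup.finite_quotient_of_finiteIndex
    haveI : ∀ q : H ⧸ G'.subgroupOf H, (M q.out).FiniteIndex := fun q => hMfi q.out
    have hIfi : (⨅ q : H ⧸ G'.subgroupOf H, M q.out).FiniteIndex :=
      Subgroup.finiteIndex_iInf (fun q => hMfi q.out)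
    haveI := hIfi
    set N : Subgroup G := (⨅ q : H ⧸ G'.subgroupOf H, M q.out).normalCore with hNdef
    haveI : N.Normal := Subgroup.normalCore_normal _
    haveI : N.FiniteIndex := Subgroup.finiteIndex_normalCore _
    refine ⟨H ⊔ N, Subgroup.finiteIndex_of_le le_sup_right, le_sup_left, ?_⟩
    intro hgHN
    have : g ∈ (H : Set G) * (N : Set G) := by rw [← Subgroup.mul_normal]; exact hgHN
    obtain ⟨a, ha, n, hn, rfl⟩ := this
    set q : H ⧸ G'.subgroupOf H := QuotientGroup.mk ⟨a, ha⟩ with hq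
    have hrel : (q.out : G)⁻¹ * a ∈ G' := by
      have h1 : (QuotientGroup.mk q.out : H ⧸ G'.subgroupOf H) = QuotientGroup.mk ⟨a, ha⟩ := by
        rw [hq]
        exact Quotient.out_eq _
      have h2 : q.out⁻¹ * (⟨a, ha⟩ : H) ∈ G'.subgroupOf H := (QuotientGroup.eq).mp h1
      exact h2
    have hKmem : (q.out : G)⁻¹ * a ∈ K := ⟨hrel, H.mul_mem (H.inv_mem q.out.2) ha⟩
    have hnM : n ∈ M q.out :=
      iInf_le (fun r : H ⧸ G'.subgroupOf H => M r.out) q (Subgroup.normalCore_le _ hn)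
    exact hgM q.out (by
      have : (q.out : G)⁻¹ * (a * n) = ((q.out : G)⁻¹ * a) * n := by group
      rw [this]
      exact (M q.out).mul_mem (hKM q.out hKmem) hnM)
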